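/- For 1 ≤ i ≤ 2n, the element v_i of the Weyl group of type C_n defined by v_i = s_i⋯s_{n-1}s_n s_{n-1}⋯s_2 s_1 for 1 ≤ i ≤ n, v_i = s_{2n-i}⋯s_2 s_1 for n+1 ≤ i ≤ 2n-1, and v_{2n} = 1, has length ℓ(v_i) = 2n - i. -/

import Mathlib

/-- Signed-permutation action of vertex `k` (0-based): swaps `k+1 ↔ k+2` and
`-(k+1) ↔ -(k+2)` if `k+2 ≤ n`, else swaps `(k+1) ↔ -(k+1)`. -/
def gfun (n k : ℕ) : ℤ → ℤ := fun x =>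
  if x = (k:ℤ)+1 then (if k+2 ≤ n then (k:ℤ)+2 else -((k:ℤ)+1))
  else if x = (if k+2 ≤ n then (k:ℤ)+2 else -((k:ℤ)+1)) then (k:ℤ)+1
  else if x = -((k:ℤ)+1) then -(if k+2 ≤ n then (k:ℤ)+2 else -((k:ℤ)+1))
  else if x = -(if k+2 ≤ n then (k:ℤ)+2 else -((k:ℤ)+1)) then -((k:ℤ)+1)
  else x

theorem gfun_invol (n k : ℕ) (x : ℤ) : gfun n k (gfun n k x) = x := by
  by_cases h : k+2 ≤ n <;>
    [simp only [gfun, if_pos h]; simp only [gfun, if_neg h]] <;> split_ifs <;> omega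

/-- Flexible evaluation lemma, low case. -/
theorem gfun_low (n k : ℕ) (h : k+2 ≤ n) (x y : ℤ)
    (hxy : (x = (k:ℤ)+1 ∧ y = (k:ℤ)+2) ∨ (x = (k:ℤ)+2 ∧ y = (k:ℤ)+1) ∨
      (x = -((k:ℤ)+1) ∧ y = -((k:ℤ)+2)) ∨ (x = -((k:ℤ)+2) ∧ y = -((k:ℤ)+1)) ∨
      ((x ≠ (k:ℤ)+1 ∧ x ≠ (k:ℤ)+2 ∧ x ≠ -((k:ℤ)+1) ∧ x ≠ -((k:ℤ)+2)) ∧ y = x)) :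
    gfun n k x = y := by
  simp only [gfun, if_pos h]; split_ifs <;> omega

/-- Flexible evaluation lemma, top case. -/
theorem gfun_top (n k : ℕ) (h : ¬ k+2 ≤ n) (x y : ℤ)
    (hxy : (x = (k:ℤ)+1 ∧ y = -((k:ℤ)+1)) ∨ (x = -((k:ℤ)+1) ∧ y = (k:ℤ)+1) ∨
      ((x ≠ (k:ℤ)+1 ∧ x ≠ -((k:ℤ)+1)) ∧ y = x)) :
    gfun n k x = y := by
  simp only [gfun, if_neg h]; split_ifs <;> omega

/-- Support bound. -/
theorem gfun_supp (n k : ℕ) (x : ℤ) :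
    gfun n k x = x ∨
      ((((k:ℤ)+1 ≤ x ∧ x ≤ (k:ℤ)+2) ∨ (-((k:ℤ)+2) ≤ x ∧ x ≤ -((k:ℤ)+1))) ∧
       (((k:ℤ)+1 ≤ gfun n k x ∧ gfun n k x ≤ (k:ℤ)+2) ∨
        (-((k:ℤ)+2) ≤ gfun n k x ∧ gfun n k x ≤ -((k:ℤ)+1)))) := by
  by_cases h : k+2 ≤ n <;>
    [simp only [gfun, if_pos h]; simp only [gfun, if_neg h]] <;> split_ifs <;> omega

theorem gfun_fix (n k : ℕ) (x : ℤ)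
    (h : ¬((((k:ℤ)+1 ≤ x ∧ x ≤ (k:ℤ)+2) ∨ (-((k:ℤ)+2) ≤ x ∧ x ≤ -((k:ℤ)+1))))) :
    gfun n k x = x := by
  by_cases hn : k+2 ≤ n <;>
    [simp only [gfun, if_pos hn]; simp only [gfun, if_neg hn]] <;> split_ifs <;> omega

/-- Commutation for far-apart vertices. -/
theorem gfun_comm (n k l : ℕ) (hf : k + 2 ≤ l ∨ l + 2 ≤ k) (x : ℤ) :
    gfun n k (gfun n l x) = gfun n l (gfun n k x) := by
  rcases gfun_supp n k x with hk | ⟨hx, hgx⟩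
  · rcases gfun_supp n l x with hl | ⟨hx', hgx'⟩
    · rw [hl, hk, hl]
    · rw [hk, gfun_fix n k _ (by omega)]
  · have hl : gfun n l x = x := gfun_fix n l _ (by omega)
    rw [hl, gfun_fix n l _ (by omega)]

/-- Order 2 relation (far apart), pointwise. -/
theorem grel2 (n k l : ℕ) (hf : k + 2 ≤ l ∨ l + 2 ≤ k) (x : ℤ) :
    gfun n k (gfun n l (gfun n k (gfun n l x))) = x := by
  rw [← gfun_comm n k l hf (gfun n l x), gfun_invol, gfun_invol]


/-- Order 3 braid relation, pointwise: vertices `k` and `k+1`, with `k+3 ≤ n`. -/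
theorem grel3 (n k : ℕ) (h : k+3 ≤ n) (x : ℤ) :
    gfun n k (gfun n (k+1) (gfun n k (gfun n (k+1) (gfun n k (gfun n (k+1) x))))) = x := by
  have h1 : k+2 ≤ n := by omega
  have h2 : (k+1)+2 ≤ n := by omega
  have K := gfun_low n k h1
  have L := gfun_low n (k+1) h2
  rw [show ((k+1:ℕ):ℤ) = (k:ℤ)+1 from by push_cast; ring] at L
  rcases eq_or_ne x ((k:ℤ)+1) with rfl | e1
  · rw [L ((k:ℤ)+1) ((k:ℤ)+1) (by omega),
      K ((k:ℤ)+1) ((k:ℤ)+2) (by omega),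
      L ((k:ℤ)+2) ((k:ℤ)+3) (by omega),
      K ((k:ℤ)+3) ((k:ℤ)+3) (by omega),
      L ((k:ℤ)+3) ((k:ℤ)+2) (by omega),
      K ((k:ℤ)+2) ((k:ℤ)+1) (by omega)]
  rcases eq_or_ne x ((k:ℤ)+2) with rfl | e2
  · rw [L ((k:ℤ)+2) ((k:ℤ)+3) (by omega),
      K ((k:ℤ)+3) ((k:ℤ)+3) (by omega),
      L ((k:ℤ)+3) ((k:ℤ)+2) (by omega),
      K ((k:ℤ)+2) ((k:ℤ)+1) (by omega),
      L ((k:ℤ)+1) ((k:ℤ)+1) (by omega),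
      K ((k:ℤ)+1) ((k:ℤ)+2) (by omega)]
  rcases eq_or_ne x ((k:ℤ)+3) with rfl | e3
  · rw [L ((k:ℤ)+3) ((k:ℤ)+2) (by omega),
      K ((k:ℤ)+2) ((k:ℤ)+1) (by omega),
      L ((k:ℤ)+1) ((k:ℤ)+1) (by omega),
      K ((k:ℤ)+1) ((k:ℤ)+2) (by omega),
      L ((k:ℤ)+2) ((k:ℤ)+3) (by omega),
      K ((k:ℤ)+3) ((k:ℤ)+3) (by omega)]
  rcases eq_or_ne x (-((k:ℤ)+1)) with rfl | e1n
  · rw [L (-((k:ℤ)+1)) (-((k:ℤ)+1)) (by omega),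
      K (-((k:ℤ)+1)) (-((k:ℤ)+2)) (by omega),
      L (-((k:ℤ)+2)) (-((k:ℤ)+3)) (by omega),
      K (-((k:ℤ)+3)) (-((k:ℤ)+3)) (by omega),
      L (-((k:ℤ)+3)) (-((k:ℤ)+2)) (by omega),
      K (-((k:ℤ)+2)) (-((k:ℤ)+1)) (by omega)]
  rcases eq_or_ne x (-((k:ℤ)+2)) with rfl | e2n
  · rw [L (-((k:ℤ)+2)) (-((k:ℤ)+3)) (by omega),
      K (-((k:ℤ)+3)) (-((k:ℤ)+3)) (by omega),
      L (-((k:ℤ)+3)) (-((k:ℤ)+2)) (by omega),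
      K (-((k:ℤ)+2)) (-((k:ℤ)+1)) (by omega),
      L (-((k:ℤ)+1)) (-((k:ℤ)+1)) (by omega),
      K (-((k:ℤ)+1)) (-((k:ℤ)+2)) (by omega)]
  rcases eq_or_ne x (-((k:ℤ)+3)) with rfl | e3n
  · rw [L (-((k:ℤ)+3)) (-((k:ℤ)+2)) (by omega),
      K (-((k:ℤ)+2)) (-((k:ℤ)+1)) (by omega),
      L (-((k:ℤ)+1)) (-((k:ℤ)+1)) (by omega),
      K (-((k:ℤ)+1)) (-((k:ℤ)+2)) (by omega),
      L (-((k:ℤ)+2)) (-((k:ℤ)+3)) (by omega),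
      K (-((k:ℤ)+3)) (-((k:ℤ)+3)) (by omega)]
  · rw [L x x (by omega), K x x (by omega), L x x (by omega), K x x (by omega),
      L x x (by omega), K x x (by omega)]

/-- Order 4 braid relation, pointwise: vertices `k` and `k+1` with `k+2 = n`. -/
theorem grel4 (n k : ℕ) (h : k+2 = n) (x : ℤ) :
    gfun n k (gfun n (k+1) (gfun n k (gfun n (k+1) (gfun n k (gfun n (k+1)
      (gfun n k (gfun n (k+1) x))))))) = x := by
  have h1 : k+2 ≤ n := by omega
  have h2 : ¬ (k+1)+2 ≤ n := by omega
  have K := gfun_low n k h1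
  have T := gfun_top n (k+1) h2
  rw [show ((k+1:ℕ):ℤ) = (k:ℤ)+1 from by push_cast; ring] at T
  rcases eq_or_ne x ((k:ℤ)+1) with rfl | f1
  · rw [T ((k:ℤ)+1) ((k:ℤ)+1) (by omega),
      K ((k:ℤ)+1) ((k:ℤ)+2) (by omega),
      T ((k:ℤ)+2) (-((k:ℤ)+2)) (by omega),
      K (-((k:ℤ)+2)) (-((k:ℤ)+1)) (by omega),
      T (-((k:ℤ)+1)) (-((k:ℤ)+1)) (by omega),
      K (-((k:ℤ)+1)) (-((k:ℤ)+2)) (by omega),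
      T (-((k:ℤ)+2)) ((k:ℤ)+2) (by omega),
      K ((k:ℤ)+2) ((k:ℤ)+1) (by omega)]
  rcases eq_or_ne x ((k:ℤ)+2) with rfl | f2
  · rw [T ((k:ℤ)+2) (-((k:ℤ)+2)) (by omega),
      K (-((k:ℤ)+2)) (-((k:ℤ)+1)) (by omega),
      T (-((k:ℤ)+1)) (-((k:ℤ)+1)) (by omega),
      K (-((k:ℤ)+1)) (-((k:ℤ)+2)) (by omega),
      T (-((k:ℤ)+2)) ((k:ℤ)+2) (by omega),
      K ((k:ℤ)+2) ((k:ℤ)+1) (by omega),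
      T ((k:ℤ)+1) ((k:ℤ)+1) (by omega),
      K ((k:ℤ)+1) ((k:ℤ)+2) (by omega)]
  rcases eq_or_ne x (-((k:ℤ)+1)) with rfl | f1n
  · rw [T (-((k:ℤ)+1)) (-((k:ℤ)+1)) (by omega),
      K (-((k:ℤ)+1)) (-((k:ℤ)+2)) (by omega),
      T (-((k:ℤ)+2)) ((k:ℤ)+2) (by omega),
      K ((k:ℤ)+2) ((k:ℤ)+1) (by omega),
      T ((k:ℤ)+1) ((k:ℤ)+1) (by omega),
      K ((k:ℤ)+1) ((k:ℤ)+2) (by omega),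
      T ((k:ℤ)+2) (-((k:ℤ)+2)) (by omega),
      K (-((k:ℤ)+2)) (-((k:ℤ)+1)) (by omega)]
  rcases eq_or_ne x (-((k:ℤ)+2)) with rfl | f2n
  · rw [T (-((k:ℤ)+2)) ((k:ℤ)+2) (by omega),
      K ((k:ℤ)+2) ((k:ℤ)+1) (by omega),
      T ((k:ℤ)+1) ((k:ℤ)+1) (by omega),
      K ((k:ℤ)+1) ((k:ℤ)+2) (by omega),
      T ((k:ℤ)+2) (-((k:ℤ)+2)) (by omega),
      K (-((k:ℤ)+2)) (-((k:ℤ)+1)) (by omega),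
      T (-((k:ℤ)+1)) (-((k:ℤ)+1)) (by omega),
      K (-((k:ℤ)+1)) (-((k:ℤ)+2)) (by omega)]
  · rw [T x x (by omega), K x x (by omega), T x x (by omega), K x x (by omega),
      T x x (by omega), K x x (by omega), T x x (by omega), K x x (by omega)]



/-- The Coxeter matrix of type `C_n` on `Fin n` (vertex `k` is the simple reflection
`s_{k+1}`); the bond between `s_{n-1}` and `s_n` is labelled `4`, consecutive bonds `3`. -/
def cMatC (n : ℕ) : CoxeterMatrix (Fin n) where
  M i j :=
    if i = j then 1
    else if (i : ℕ) + 1 = j ∨ (j : ℕ) + 1 = i then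
      (if (i : ℕ) + (j : ℕ) = 2 * n - 3 then 4 else 3)
    else 2
  isSymm := by
    ext i j
    show (if j = i then 1
      else if (j : ℕ) + 1 = i ∨ (i : ℕ) + 1 = j then
        (if (j : ℕ) + (i : ℕ) = 2 * n - 3 then 4 else 3)
      else 2) = (if i = j then 1
      else if (i : ℕ) + 1 = j ∨ (j : ℕ) + 1 = i then
        (if (i : ℕ) + (j : ℕ) = 2 * n - 3 then 4 else 3)
      else 2)
    rcases eq_or_ne i j with h | h
    · simp [h]
    · simp only [if_neg h, if_neg (Ne.symm h)]
      by_cases h1 : (i : ℕ) + 1 = j ∨ (j : ℕ) + 1 = i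
      · simp [h1, h1.symm, Nat.add_comm]
      · have h2 : ¬((j : ℕ) + 1 = i ∨ (i : ℕ) + 1 = j) := fun hh => h1 hh.symm
        simp [h1, h2]
  diagonal i := by simp
  off_diagonal i j h := by
    simp only [if_neg h]
    split_ifs <;> omega

/-- The Coxeter system of type `C_n`. -/
noncomputable def csC (n : ℕ) : CoxeterSystem (cMatC n) (cMatC n).Group :=
  (cMatC n).toCoxeterSystem

/-- Index conversion: the 1-indexed generator `s_i` corresponds to `⟨i-1⟩ : Fin n`. -/
def idxF (n : ℕ) (hn : 0 < n) (i : ℕ) : Fin n := ⟨(i - 1) % n, Nat.mod_lt _ hn⟩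


/-- Reduced word of `v_i`. -/
def vword (n i : ℕ) : List ℕ :=
  if i ≤ n then List.range' i (n - i + 1) ++ (List.range' 1 (n - 1)).reverse
  else (List.range' 1 (2 * n - i)).reverse

/-- Word of `u_k = s_{n+1-k} ⋯ s_{n-1} s_n`. -/
def uwordC (n k : ℕ) : List ℕ := List.range' (n + 1 - k) k

/-- Word of `ρ_i`. -/
def rhoWord (n i : ℕ) : List ℕ :=
  if i ≤ n then (List.range i).reverse
  else List.range' (2 * n - i + 1) (i - n) ++ (List.range n).reverse

/-- The set `𝒫^n_C`: partitions with parts in `(0, 2n]`, parts `< n` strictly decreasing. -/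
def PCset (n : ℕ) : Set (List ℕ) :=
  {L | L.Chain' (fun a b => b ≤ a ∧ (a < n → b < a)) ∧ ∀ x ∈ L, 0 < x ∧ x ≤ 2 * n}

/-- The set `𝒮𝒫(n)` of strict partitions with parts at most `n`. -/
def SPset (n : ℕ) : Set (List ℕ) :=
  {L | L.Chain' (fun a b => b < a) ∧ ∀ x ∈ L, 0 < x ∧ x ≤ n}

/-- `λ ↦ λ^* = (n+1-λ_l, …, n+1-λ_1)`. -/
def starSP (n : ℕ) (L : List ℕ) : List ℕ := (L.map (fun k => n + 1 - k)).reverse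

/-- The signed permutation attached to a vertex. -/
def gperm (n : ℕ) (k : Fin n) : Equiv.Perm ℤ :=
  Function.Involutive.toPerm (gfun n (k : ℕ)) (gfun_invol n (k : ℕ))

theorem gperm_apply (n : ℕ) (k : Fin n) (x : ℤ) : gperm n k x = gfun n (k : ℕ) x := rfl

theorem gperm_invol (n : ℕ) (k : Fin n) : gperm n k * gperm n k = 1 := by
  ext x
  simp only [Equiv.Perm.mul_apply, gperm_apply, Equiv.Perm.one_apply, gfun_invol]

theorem gliftable (n : ℕ) : (cMatC n).IsLiftable (gperm n) := by
  have key : ∀ k l : Fin n, (k : ℕ) + 1 = (l : ℕ) →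
      (gperm n k * gperm n l) ^ (if (k : ℕ) + (l : ℕ) = 2 * n - 3 then 4 else 3) = 1 := by
    intro k l hkl
    have hlt : (l : ℕ) < n := l.isLt
    by_cases htop : (k : ℕ) + (l : ℕ) = 2 * n - 3
    · rw [if_pos htop]
      have hn2 : (k : ℕ) + 2 = n := by omega
      ext x
      simp only [pow_succ, pow_zero, one_mul, Equiv.Perm.mul_apply, gperm_apply,
        Equiv.Perm.one_apply, ← hkl]
      exact grel4 n (k : ℕ) hn2 x
    · rw [if_neg htop]
      have hn3 : (k : ℕ) + 3 ≤ n := by omega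
      ext x
      simp only [pow_succ, pow_zero, one_mul, Equiv.Perm.mul_apply, gperm_apply,
        Equiv.Perm.one_apply, ← hkl]
      exact grel3 n (k : ℕ) hn3 x
  intro i j
  show (gperm n i * gperm n j) ^
    (if i = j then 1
     else if (i : ℕ) + 1 = j ∨ (j : ℕ) + 1 = i then
       (if (i : ℕ) + (j : ℕ) = 2 * n - 3 then 4 else 3)
     else 2) = 1
  rcases eq_or_ne i j with rfl | hij
  · rw [if_pos rfl, pow_one, gperm_invol]
  · rw [if_neg hij]
    by_cases hadj : (i : ℕ) + 1 = j ∨ (j : ℕ) + 1 = i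
    · rw [if_pos hadj]
      rcases hadj with h | h
      · exact key i j h
      · have h2 := key j i h
        rw [show (j : ℕ) + (i : ℕ) = (i : ℕ) + (j : ℕ) from Nat.add_comm _ _] at h2
        have conj : gperm n i * gperm n j
            = gperm n i * (gperm n j * gperm n i) * (gperm n i)⁻¹ := by
          group
        rw [conj, conj_pow, h2, mul_one, mul_inv_cancel]
    · rw [if_neg hadj]
      have hfar : (i : ℕ) + 2 ≤ (j : ℕ) ∨ (j : ℕ) + 2 ≤ (i : ℕ) := by
        have : (i : ℕ) ≠ (j : ℕ) := fun hc => hij (Fin.ext hc)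
        omega
      ext x
      simp only [pow_succ, pow_zero, one_mul, Equiv.Perm.mul_apply, gperm_apply,
        Equiv.Perm.one_apply]
      exact grel2 n (i : ℕ) (j : ℕ) hfar x

/-- The signed-permutation representation of `W(C_n)`. -/
noncomputable def phiC (n : ℕ) : (cMatC n).Group →* Equiv.Perm ℤ :=
  (csC n).lift ⟨gperm n, gliftable n⟩

theorem phiC_simple (n : ℕ) (k : Fin n) (x : ℤ) :
    phiC n ((csC n).simple k) x = gfun n (k : ℕ) x := by
  rw [phiC, (csC n).lift_apply_simple (gliftable n) k]; rfl

/-- The distance statistic: position of x on the path 1-2-…-n-(-n)-…-(-1). -/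
def dC (n : ℕ) (x : ℤ) : ℕ := (if 0 < x then x - 1 else 2*(n:ℤ) + x).toNat

theorem dC_lip (n : ℕ) (k : Fin n) (x : ℤ) : dC n (gfun n (k : ℕ) x) ≤ dC n x + 1 := by
  have hk : (k : ℕ) < n := k.isLt
  unfold dC
  by_cases h : (k : ℕ) + 2 ≤ n <;>
    [simp only [gfun, if_pos h]; simp only [gfun, if_neg h]] <;> split_ifs <;> omega

theorem lbd (n : ℕ) (ω : List (Fin n)) :
    dC n ((phiC n) ((csC n).wordProd ω) 1) ≤ ω.length := by
  induction ω with
  | nil => simp [dC]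
  | cons k ω ih =>
    rw [CoxeterSystem.wordProd_cons, map_mul, Equiv.Perm.mul_apply, List.length_cons]
    calc dC n ((phiC n) ((csC n).simple k) ((phiC n) ((csC n).wordProd ω) 1))
        = dC n (gfun n (k:ℕ) ((phiC n) ((csC n).wordProd ω) 1)) := by rw [phiC_simple]
      _ ≤ dC n ((phiC n) ((csC n).wordProd ω) 1) + 1 := dC_lip n k _
      _ ≤ ω.length + 1 := by omega

theorem len_ge (n : ℕ) (w : (cMatC n).Group) :
    dC n ((phiC n) w 1) ≤ (csC n).length w := by
  obtain ⟨ω, h1, h2⟩ := (csC n).exists_reduced_word w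
  have := lbd n ω
  rw [← h2] at this
  have h1' : (csC n).length w = ω.length := by rw [h2]; exact h1
  omega

theorem desc_val (n : ℕ) (hn : 0 < n) (m : ℕ) (hm : m ≤ n - 1) :
    (phiC n) ((csC n).wordProd (((List.range' 1 m).reverse).map (idxF n hn))) 1
      = (m:ℤ)+1 := by
  induction m with
  | zero => simp
  | succ m ih =>
    rw [List.range'_concat, List.reverse_append, List.reverse_singleton,
      List.singleton_append, List.map_cons, CoxeterSystem.wordProd_cons, map_mul,
      Equiv.Perm.mul_apply, ih (by omega)]
    rw [phiC_simple]
    have hidx : ((idxF n hn (1 + 1 * m)) : ℕ) = m := by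
      simp only [idxF]
      have : 1 + 1 * m - 1 = m := by omega
      rw [this, Nat.mod_eq_of_lt (by omega)]
    rw [hidx]
    exact gfun_low n m (by omega) _ _ (by omega)

theorem asc_val (n : ℕ) (hn : 0 < n) (m : ℕ) (hm : m ≤ n - 1) :
    (phiC n) ((csC n).wordProd ((List.range' (n-m) (m+1)).map (idxF n hn))) (n:ℤ)
      = -((n:ℤ)-(m:ℕ)) := by
  induction m with
  | zero =>
    rw [show List.range' (n - 0) (0+1) = [n] from by norm_num, List.map_cons, List.map_nil,
      CoxeterSystem.wordProd_singleton, phiC_simple]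
    have hidx : ((idxF n hn n) : ℕ) = n - 1 := by
      simp only [idxF]
      rw [Nat.mod_eq_of_lt (by omega)]
    rw [hidx]
    rw [gfun_top n (n-1) (by omega) _ (-((n:ℤ)-(0:ℕ))) (by omega)]
  | succ m ih =>
    have h1 : n - (m+1) + 1 = n - m := by omega
    rw [show List.range' (n-(m+1)) (m+1+1) = (n-(m+1)) :: List.range' (n-m) (m+1) from by
        rw [List.range'_succ, h1],
      List.map_cons, CoxeterSystem.wordProd_cons, map_mul, Equiv.Perm.mul_apply,
      ih (by omega), phiC_simple]
    have hidx : ((idxF n hn (n-(m+1))) : ℕ) = n - m - 2 := by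
      simp only [idxF]
      rw [show n - (m+1) - 1 = n - m - 2 from by omega, Nat.mod_eq_of_lt (by omega)]
    rw [hidx]
    exact gfun_low n (n-m-2) (by omega) _ _ (by omega)

/-- `ℓ(v_i) = 2n - i` for `1 ≤ i ≤ 2n`. -/
theorem stmt1 (n i : ℕ) (hn : 2 ≤ n) (h1 : 1 ≤ i) (h2 : i ≤ 2 * n) :
    (csC n).length ((csC n).wordProd ((vword n i).map (idxF n (by omega))))
      = 2 * n - i := by
  have hn0 : 0 < n := by omega
  apply le_antisymm
  · calc (csC n).length ((csC n).wordProd ((vword n i).map (idxF n (by omega))))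
        ≤ ((vword n i).map (idxF n (by omega : 0 < n))).length :=
          (csC n).length_wordProd_le _
      _ = (vword n i).length := List.length_map _
      _ = 2 * n - i := by
          unfold vword
          split_ifs with h
          · simp only [List.length_append, List.length_reverse, List.length_range']
            omega
          · simp only [List.length_reverse, List.length_range']
  · have key := len_ge n ((csC n).wordProd ((vword n i).map (idxF n hn0)))
    suffices hval :
        dC n ((phiC n) ((csC n).wordProd ((vword n i).map (idxF n hn0))) 1) = 2 * n - i by
      omega
    by_cases hin : i ≤ n
    · rw [vword, if_pos hin, List.map_append, CoxeterSystem.wordProd_append, map_mul,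
        Equiv.Perm.mul_apply, desc_val n hn0 (n-1) le_rfl,
        show ((n-1:ℕ):ℤ)+1 = (n:ℤ) from by omega]
      have hasc := asc_val n hn0 (n-i) (by omega)
      rw [show n-(n-i) = i from by omega] at hasc
      rw [hasc]
      unfold dC
      rw [if_neg (by omega)]
      omega
    · rw [vword, if_neg hin, desc_val n hn0 (2*n-i) (by omega)]
      unfold dC
      rw [if_pos (by omega)]
      omega
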